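/- A permutation τ of size n is in the image of the flip transformation T (which reverses all maximal descending runs) if and only if every pair of adjacent ascending runs (R_i, R_{i+1}) of τ is overlapping, i.e., min(R_i) < max(R_{i+1}). -/

import Mathlib

/-- Split a list into maximal strictly decreasing contiguous blocks ("falls"). -/
def fallSplit : List ℕ → List (List ℕ)
  | [] => []
  | a :: rest =>
    match fallSplit rest with
    | (b :: bs) :: gs => if b < a then (a :: b :: bs) :: gs else [a] :: (b :: bs) :: gs
    | gs => [a] :: gs

/-- Split a list into maximal strictly increasing contiguous blocks ("runs"). -/
def runSplit : List ℕ → List (List ℕ)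
  | [] => []
  | a :: rest =>
    match runSplit rest with
    | (b :: bs) :: gs => if a < b then (a :: b :: bs) :: gs else [a] :: (b :: bs) :: gs
    | gs => [a] :: gs

/-- The flip transformation `T`: reverse every fall. -/
def flipT (l : List ℕ) : List ℕ := ((fallSplit l).map List.reverse).flatten

/-- `l` is the one-line notation of a permutation of `{1, …, n}`. -/
def IsPermList (n : ℕ) (l : List ℕ) : Prop := l.Perm (List.range' 1 n)

/-- Every pair of adjacent runs overlaps: `min R₁ < max R₂` (pop-stacked condition). -/
def Overlapping (l : List ℕ) : Prop :=
  ∀ R₁ R₂ : List ℕ, [R₁, R₂] <:+: runSplit l → ∃ a ∈ R₁, ∃ b ∈ R₂, a < b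

open List

section Helpers


lemma chain'_adj {α} {R : α → α → Prop} {l : List α} {a b : α}
    (h : IsChain R l) (hab : [a, b] <:+: l) : R a b := by
  have := h.infix hab
  simpa [List.isChain_cons_cons] using this

lemma chain'_of_adj {α} {R : α → α → Prop} :
    ∀ l : List α, (∀ a b, [a, b] <:+: l → R a b) → IsChain R l
  | [], _ => isChain_nil
  | [a], _ => isChain_singleton a
  | a :: b :: t, h => by
    rw [isChain_cons_cons]
    exact ⟨h a b ⟨[], t, rfl⟩, chain'_of_adj (b :: t) (fun x y hxy => h x y (infix_cons hxy))⟩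

lemma infix_pair_map_of {α β} (f : α → β) {l : List α} {a b : α} (h : [a, b] <:+: l) :
    [f a, f b] <:+: l.map f := by
  obtain ⟨s, t, rfl⟩ := h
  exact ⟨s.map f, t.map f, by simp⟩

lemma infix_pair_map {α β} (f : α → β) : ∀ (l : List α) {x y : β},
    [x, y] <:+: l.map f → ∃ a b, [a, b] <:+: l ∧ f a = x ∧ f b = y := by
  intro l
  induction l with
  | nil =>
    intro x y h
    obtain ⟨s, t, hst⟩ := h
    exact absurd hst (by simp)
  | cons a l ih =>
    intro x y h
    obtain ⟨s, t, hst⟩ := h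
    cases s with
    | nil =>
      simp only [nil_append, map_cons, cons_append] at hst
      obtain ⟨hx, hyt⟩ := List.cons.injEq .. ▸ hst |>.imp id id
      cases l with
      | nil => simp at hyt
      | cons b l' =>
        simp only [map_cons] at hyt
        have := List.cons.injEq .. ▸ hyt
        exact ⟨a, b, ⟨[], l', rfl⟩, hx.symm, this.1.symm⟩
    | cons s0 s' =>
      simp only [cons_append, map_cons] at hst
      have h2 : s' ++ [x, y] ++ t = l.map f := (List.cons.injEq .. ▸ hst).2
      obtain ⟨a', b', hab, hfa, hfb⟩ := ih ⟨s', t, h2⟩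
      exact ⟨a', b', infix_cons hab, hfa, hfb⟩

lemma infix_pair_flatten {α} {gss : List (List α)} {c₁ c₂ : List α}
    (h : [c₁, c₂] <:+: gss) (h₁ : c₁ ≠ []) (h₂ : c₂ ≠ []) :
    [c₁.getLast h₁, c₂.head h₂] <:+: gss.flatten := by
  obtain ⟨s, t, rfl⟩ := h
  refine ⟨s.flatten ++ c₁.dropLast, c₂.tail ++ t.flatten, ?_⟩
  conv_rhs => rw [← List.dropLast_append_getLast h₁, ← List.cons_head_tail h₂]
  simp
  rw [← List.cons_append, List.cons_head_tail]

lemma head_le_of_chain' : ∀ {l : List ℕ} (h : l ≠ []), IsChain (· < ·) l →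
    ∀ x ∈ l, l.head h ≤ x := by
  intro l
  induction l with
  | nil => simp
  | cons a t ih =>
    intro _ hc x hx
    rcases mem_cons.1 hx with rfl | hx
    · simp
    · cases t with
      | nil => simp at hx
      | cons b t' =>
        have hc' := isChain_cons_cons.1 hc
        exact le_trans (le_of_lt hc'.1) (ih (by simp) hc'.2 x hx)

lemma le_getLast_of_chain' : ∀ {l : List ℕ} (h : l ≠ []), IsChain (· < ·) l →
    ∀ x ∈ l, x ≤ l.getLast h := by
  intro l
  induction l with
  | nil => simp
  | cons a t ih =>
    intro _ hc x hx
    cases t with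
    | nil => simp at hx; simp [hx]
    | cons b t' =>
      have hc' := isChain_cons_cons.1 hc
      rw [getLast_cons (by simp)]
      rcases mem_cons.1 hx with rfl | hx
      · exact le_trans (le_of_lt hc'.1) (ih (by simp) hc'.2 b (by simp))
      · exact ih (by simp) hc'.2 x hx

lemma flatten_map_reverse_perm {α} : ∀ L : List (List α),
    (L.map List.reverse).flatten.Perm L.flatten
  | [] => .refl _
  | l :: L => by simpa using (l.reverse_perm).append (flatten_map_reverse_perm L)


def gsplit (p : ℕ → ℕ → Prop) [DecidableRel p] : List ℕ → List (List ℕ)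
  | [] => []
  | a :: rest =>
    match gsplit p rest with
    | (b :: bs) :: gs => if p a b then (a :: b :: bs) :: gs else [a] :: (b :: bs) :: gs
    | gs => [a] :: gs

variable (p : ℕ → ℕ → Prop) [DecidableRel p]

lemma gsplit_nil : gsplit p [] = [] := rfl

lemma gsplit_cons_nil {rest : List ℕ} (a : ℕ) (h : gsplit p rest = []) :
    gsplit p (a :: rest) = [[a]] := by
  unfold gsplit; rw [h]

lemma gsplit_cons_nilcons {rest : List ℕ} {gs : List (List ℕ)} (a : ℕ)
    (h : gsplit p rest = [] :: gs) : gsplit p (a :: rest) = [a] :: [] :: gs := by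
  unfold gsplit; rw [h]

lemma gsplit_cons_cons {rest : List ℕ} {b : ℕ} {bs : List ℕ} {gs : List (List ℕ)} (a : ℕ)
    (h : gsplit p rest = (b :: bs) :: gs) :
    gsplit p (a :: rest) =
      if p a b then (a :: b :: bs) :: gs else [a] :: (b :: bs) :: gs := by
  unfold gsplit; rw [h]

/-- boundary relation: no merging possible across adjacent blocks. -/
def Bdry (f g : List ℕ) : Prop := ∀ a ∈ f.getLast?, ∀ b ∈ g.head?, ¬ p a b

/-- Combined invariant of `gsplit`. -/
lemma gsplit_good : ∀ l : List ℕ,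
    (gsplit p l).flatten = l ∧ (∀ g ∈ gsplit p l, g ≠ [] ∧ IsChain p g) ∧
      IsChain (Bdry p) (gsplit p l)
  | [] => by simp [gsplit_nil]
  | a :: rest => by
    obtain ⟨hf, hne, hbd⟩ := gsplit_good rest
    rcases h : gsplit p rest with _ | ⟨_ | ⟨b, bs⟩, gs⟩
    · rw [gsplit_cons_nil p a h]
      rw [h] at hf; simp at hf
      simp [hf, Bdry]
    · exact absurd (hne [] (by rw [h]; simp)).1 (by simp)
    · rw [h] at hf hne hbd
      have hbbs : IsChain p (b :: bs) := (hne _ (by simp)).2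
      rw [gsplit_cons_cons p a h]
      by_cases hab : p a b
      · simp only [if_pos hab]
        refine ⟨by simpa using hf, ?_, ?_⟩
        · intro g hg
          rcases mem_cons.1 hg with rfl | hg
          · exact ⟨by simp, isChain_cons_cons.2 ⟨hab, hbbs⟩⟩
          · exact hne g (by simp [hg])
        · rw [isChain_cons] at hbd ⊢
          refine ⟨?_, hbd.2⟩
          intro y hy
          have := hbd.1 y hy
          intro u hu v hv
          exact this u (by rwa [getLast?_cons_cons] at hu) v hv
      · simp only [if_neg hab]
        refine ⟨by simpa using hf, ?_, ?_⟩
        · intro g hg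
          rcases mem_cons.1 hg with rfl | hg
          · exact ⟨by simp, by simp⟩
          · exact hne g hg
        · rw [isChain_cons_cons]
          refine ⟨?_, hbd⟩
          intro u hu v hv
          simp at hu hv
          subst hu; subst hv; exact hab

/-- The first block of `gsplit` starts with the head of the list. -/
lemma gsplit_head (a : ℕ) (l : List ℕ) :
    ∃ t gs, gsplit p (a :: l) = (a :: t) :: gs := by
  rcases h : gsplit p l with _ | ⟨_ | ⟨b, bs⟩, gs⟩
  · exact ⟨[], [], gsplit_cons_nil p a h⟩
  · exact ⟨[], [] :: gs, gsplit_cons_nilcons p a h⟩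
  · rw [gsplit_cons_cons p a h]
    by_cases hab : p a b
    · exact ⟨b :: bs, gs, by simp [hab]⟩
    · exact ⟨[], (b :: bs) :: gs, by simp [hab]⟩

/-- `gsplit` of a chain is a single block. -/
lemma gsplit_single : ∀ (g : List ℕ), g ≠ [] → IsChain p g → gsplit p g = [g]
  | [a], _, _ => gsplit_cons_nil p a (gsplit_nil p)
  | a :: b :: g', _, hc => by
    have hc' := isChain_cons_cons.1 hc
    have ih := gsplit_single (b :: g') (by simp) hc'.2
    rw [gsplit_cons_cons p a ih, if_pos hc'.1]

/-- Prepending a chain block to a list. -/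
lemma gsplit_prepend : ∀ (g : List ℕ) (hg : g ≠ []), IsChain p g →
    ∀ (b : ℕ) (t : List ℕ) (gs : List (List ℕ)) (m : List ℕ),
      gsplit p (b :: m) = (b :: t) :: gs →
      gsplit p (g ++ b :: m) =
        if p (g.getLast hg) b then (g ++ b :: t) :: gs else g :: (b :: t) :: gs
  | [a], _, _, b, t, gs, m, h => by
    rw [show [a] ++ b :: m = a :: b :: m from rfl, gsplit_cons_cons p a h]
    simp
    congr
  | a :: a' :: g', _, hc, b, t, gs, m, h => by
    have hc' := isChain_cons_cons.1 hc
    have ih := gsplit_prepend (a' :: g') (by simp) hc'.2 b t gs m h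
    rw [show (a :: a' :: g') ++ b :: m = a :: ((a' :: g') ++ b :: m) from rfl]
    by_cases hcond : p ((a' :: g').getLast (by simp)) b
    · rw [if_pos hcond] at ih
      rw [gsplit_cons_cons p a (by simpa using ih), if_pos hc'.1]
      rw [getLast_cons (by simp), if_pos hcond]
      simp
    · rw [if_neg hcond] at ih
      rw [gsplit_cons_cons p a (by simpa using ih), if_pos hc'.1]
      rw [getLast_cons (by simp), if_neg hcond]


/-- Reconstruction: `gsplit` of a flatten of maximal chain blocks gives back the blocks. -/
lemma gsplit_reconstruct : ∀ fs : List (List ℕ),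
    (∀ f ∈ fs, f ≠ [] ∧ IsChain p f) → IsChain (Bdry p) fs →
    gsplit p fs.flatten = fs
  | [], _, _ => rfl
  | [f], hf, _ => by
    simpa using gsplit_single p f (hf f (by simp)).1 (hf f (by simp)).2
  | f :: f₂ :: fs', hf, hbd => by
    have hf₂ := hf f₂ (by simp)
    have ih : gsplit p (f₂ :: fs').flatten = f₂ :: fs' :=
      gsplit_reconstruct (f₂ :: fs') (fun g hg => hf g (by simp [mem_cons.1 hg])) (isChain_cons.1 hbd).2
    obtain ⟨b, f₂', rfl⟩ : ∃ b f₂', f₂ = b :: f₂' := by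
      rcases f₂ with _ | ⟨b, f₂'⟩
      · exact absurd rfl hf₂.1
      · exact ⟨b, f₂', rfl⟩
    have hflat : (b :: f₂') :: fs' = gsplit p ((b :: f₂') ++ fs'.flatten) := by
      simpa using ih.symm
    have hfne := (hf f (by simp)).1
    have hstep := gsplit_prepend p f hfne (hf f (by simp)).2 b f₂' fs'
      (f₂' ++ fs'.flatten) (by simpa using ih)
    have hnb : ¬ p (f.getLast hfne) b := by
      have hb := (isChain_cons_cons.1 hbd).1
      exact hb _ (List.getLast?_eq_getLast hfne ▸ rfl) b rfl
    rw [if_neg hnb] at hstep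
    calc gsplit p (f :: (b :: f₂') :: fs').flatten
        = gsplit p (f ++ b :: (f₂' ++ fs'.flatten)) := by simp
      _ = f :: (b :: f₂') :: fs' := hstep

/-- `gsplit` of a flatten of chain blocks: each resulting block is a flatten of a
nonempty consecutive group of the original blocks. -/
lemma gsplit_merge : ∀ gs : List (List ℕ), (∀ g ∈ gs, g ≠ [] ∧ IsChain p g) →
    ∃ gss : List (List (List ℕ)), gss.flatten = gs ∧ (∀ c ∈ gss, c ≠ []) ∧
      gsplit p gs.flatten = gss.map List.flatten
  | [], _ => ⟨[], by simp, by simp, by simp [gsplit_nil]⟩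
  | [g], hg => by
    refine ⟨[[g]], by simp, by simp, ?_⟩
    simpa using gsplit_single p g (hg g (by simp)).1 (hg g (by simp)).2
  | g :: g₂ :: gs', hg => by
    obtain ⟨gss', hflat, hne, hsplit⟩ :=
      gsplit_merge (g₂ :: gs') (fun x hx => hg x (by simp [mem_cons.1 hx]))
    obtain ⟨b, g₂', rfl⟩ : ∃ b g₂', g₂ = b :: g₂' := by
      rcases g₂ with _ | ⟨b, g₂'⟩
      · exact absurd rfl (hg [] (by simp)).1
      · exact ⟨b, g₂', rfl⟩
    -- first block of gsplit of the tail starts with b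
    obtain ⟨t, rs, hd⟩ := gsplit_head p b (g₂' ++ gs'.flatten)
    have hd' : gsplit p ((b :: g₂') :: gs').flatten = (b :: t) :: rs := by
      simpa using hd
    -- decompose gss' accordingly
    obtain ⟨c, gss'', rfl⟩ : ∃ c gss'', gss' = c :: gss'' := by
      rcases gss' with _ | ⟨c, gss''⟩
      · rw [hd'] at hsplit; simp at hsplit
      · exact ⟨c, gss'', rfl⟩
    rw [hd'] at hsplit
    obtain ⟨hc_eq, hrs⟩ : c.flatten = b :: t ∧ List.map List.flatten gss'' = rs := by
      have := List.cons.injEq (b :: t) rs c.flatten (List.map List.flatten gss'') ▸ hsplit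
      exact ⟨this.1.symm, this.2.symm⟩
    have hgne := hg g (by simp)
    have hstep := gsplit_prepend p g hgne.1 hgne.2 b t rs (g₂' ++ gs'.flatten) hd
    by_cases hcond : p (g.getLast hgne.1) b
    · rw [if_pos hcond] at hstep
      refine ⟨(g :: c) :: gss'', ?_, ?_, ?_⟩
      · simpa using hflat
      · intro x hx; rcases mem_cons.1 hx with rfl | hx
        · simp
        · exact hne x (by simp [hx])
      · calc gsplit p (g :: (b :: g₂') :: gs').flatten
            = gsplit p (g ++ b :: (g₂' ++ gs'.flatten)) := by simp
          _ = (g ++ b :: t) :: rs := hstep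
          _ = List.map List.flatten ((g :: c) :: gss'') := by
              simp [← hrs, ← hc_eq]
    · rw [if_neg hcond] at hstep
      refine ⟨[g] :: c :: gss'', ?_, ?_, ?_⟩
      · simpa using hflat
      · intro x hx; rcases mem_cons.1 hx with rfl | hx
        · simp
        · exact hne x hx
      · calc gsplit p (g :: (b :: g₂') :: gs').flatten
            = gsplit p (g ++ b :: (g₂' ++ gs'.flatten)) := by simp
          _ = g :: (b :: t) :: rs := hstep
          _ = List.map List.flatten ([g] :: c :: gss'') := by
              simp [← hrs, ← hc_eq]


lemma fallSplit_eq : ∀ l, fallSplit l = gsplit (fun a b => b < a) l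
  | [] => rfl
  | a :: rest => by
    have ih := fallSplit_eq rest
    rcases h : gsplit (fun a b => b < a) rest with _ | ⟨_ | ⟨b, bs⟩, gs⟩
    · rw [gsplit_cons_nil _ a h]; unfold fallSplit; rw [ih, h]
    · rw [gsplit_cons_nilcons _ a h]; unfold fallSplit; rw [ih, h]
    · rw [gsplit_cons_cons _ a h]; unfold fallSplit; rw [ih, h]

lemma runSplit_eq : ∀ l, runSplit l = gsplit (fun a b => a < b) l
  | [] => rfl
  | a :: rest => by
    have ih := runSplit_eq rest
    rcases h : gsplit (fun a b => a < b) rest with _ | ⟨_ | ⟨b, bs⟩, gs⟩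
    · rw [gsplit_cons_nil _ a h]; unfold runSplit; rw [ih, h]
    · rw [gsplit_cons_nilcons _ a h]; unfold runSplit; rw [ih, h]
    · rw [gsplit_cons_cons _ a h]; unfold runSplit; rw [ih, h]


/-- A permutation τ is in the image of the flip transformation T iff every pair of
adjacent runs overlaps (min of the left run is smaller than max of the right run). -/
theorem popStacked_iff_overlapping (n : ℕ) (τ : List ℕ) (hτ : IsPermList n τ) :
    (∃ π : List ℕ, IsPermList n π ∧ flipT π = τ) ↔ Overlapping τ := by
  constructor
  · rintro ⟨π, hπ, rfl⟩
    intro R₁ R₂ hR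
    have hgood := gsplit_good (fun a b : ℕ => b < a) π
    have hnodup : π.Nodup := hπ.symm.nodup (List.nodup_range' (s := 1) (n := n))
    -- the reversed falls are increasing chains
    have hgs : ∀ g ∈ (gsplit (fun a b : ℕ => b < a) π).map List.reverse,
        g ≠ [] ∧ IsChain (· < ·) g := by
      intro g hg
      obtain ⟨f, hf, rfl⟩ := mem_map.1 hg
      obtain ⟨hfne, hfc⟩ := hgood.2.1 f hf
      refine ⟨by simpa using hfne, ?_⟩
      rw [List.isChain_reverse]
      exact hfc
    obtain ⟨gss, hflat, hne, hsplit⟩ :=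
      gsplit_merge (fun a b : ℕ => a < b) ((gsplit (fun a b : ℕ => b < a) π).map List.reverse) hgs
    have hτeq : flipT π = ((gsplit (fun a b : ℕ => b < a) π).map List.reverse).flatten := by
      unfold flipT; rw [fallSplit_eq]
    rw [runSplit_eq, hτeq, hsplit] at hR
    obtain ⟨c₁, c₂, hcc, rfl, rfl⟩ := infix_pair_map List.flatten gss hR
    have hc₁ : c₁ ≠ [] := hne c₁ (hcc.sublist.subset (by simp))
    have hc₂ : c₂ ≠ [] := hne c₂ (hcc.sublist.subset (by simp))
    have hadj := infix_pair_flatten hcc hc₁ hc₂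
    rw [hflat] at hadj
    obtain ⟨f₁, f₂, hff, hg₁, hg₂⟩ := infix_pair_map List.reverse _ hadj
    have hf₁ : f₁ ∈ gsplit (fun a b : ℕ => b < a) π := hff.sublist.subset (by simp)
    have hf₂ : f₂ ∈ gsplit (fun a b : ℕ => b < a) π := hff.sublist.subset (by simp)
    have hf₁ne : f₁ ≠ [] := (hgood.2.1 f₁ hf₁).1
    have hf₂ne : f₂ ≠ [] := (hgood.2.1 f₂ hf₂).1
    have hbdry : Bdry (fun a b : ℕ => b < a) f₁ f₂ := chain'_adj hgood.2.2 hff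
    have hle : f₁.getLast hf₁ne ≤ f₂.head hf₂ne := by
      have := hbdry _ (by rw [List.getLast?_eq_getLast hf₁ne]; rfl)
        _ (by rw [List.head?_eq_head hf₂ne]; rfl)
      exact Nat.not_lt.1 this
    have hππ : [f₁.getLast hf₁ne, f₂.head hf₂ne] <:+: π := by
      have := infix_pair_flatten hff hf₁ne hf₂ne
      rwa [hgood.1] at this
    have hnepair : f₁.getLast hf₁ne ≠ f₂.head hf₂ne := by
      have hsub : [f₁.getLast hf₁ne, f₂.head hf₂ne].Nodup := hnodup.sublist hππ.sublist
      simpa using hsub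
    have hlt : f₁.getLast hf₁ne < f₂.head hf₂ne := lt_of_le_of_ne hle hnepair
    refine ⟨f₁.getLast hf₁ne, ?_, f₂.head hf₂ne, ?_, hlt⟩
    · exact mem_flatten.2 ⟨c₁.getLast hc₁, List.getLast_mem hc₁,
        by rw [← hg₁]; exact mem_reverse.2 (List.getLast_mem hf₁ne)⟩
    · exact mem_flatten.2 ⟨c₂.head hc₂, List.head_mem hc₂,
        by rw [← hg₂]; exact mem_reverse.2 (List.head_mem hf₂ne)⟩
  · intro hov
    have hgood := gsplit_good (fun a b : ℕ => a < b) τ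
    refine ⟨((gsplit (fun a b : ℕ => a < b) τ).map List.reverse).flatten, ?_, ?_⟩
    · have hperm : ((gsplit (fun a b : ℕ => a < b) τ).map List.reverse).flatten.Perm
          (gsplit (fun a b : ℕ => a < b) τ).flatten := flatten_map_reverse_perm _
      rw [hgood.1] at hperm
      exact hperm.trans hτ
    · unfold flipT
      rw [fallSplit_eq]
      have hrec : gsplit (fun a b : ℕ => b < a)
          (((gsplit (fun a b : ℕ => a < b) τ).map List.reverse).flatten) =
          (gsplit (fun a b : ℕ => a < b) τ).map List.reverse := by
        apply gsplit_reconstruct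
        · intro f hf
          obtain ⟨r, hr, rfl⟩ := mem_map.1 hf
          obtain ⟨hrne, hrc⟩ := hgood.2.1 r hr
          refine ⟨by simpa using hrne, ?_⟩
          rw [List.isChain_reverse]
          exact hrc
        · apply chain'_of_adj
          intro f g hfg
          obtain ⟨r₁, r₂, hrr, rfl, rfl⟩ := infix_pair_map List.reverse _ hfg
          intro a ha b hb
          have hr₁ : r₁ ∈ gsplit (fun a b : ℕ => a < b) τ := hrr.sublist.subset (by simp)
          have hr₂ : r₂ ∈ gsplit (fun a b : ℕ => a < b) τ := hrr.sublist.subset (by simp)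
          have hr₁ne : r₁ ≠ [] := (hgood.2.1 r₁ hr₁).1
          have hr₂ne : r₂ ≠ [] := (hgood.2.1 r₂ hr₂).1
          -- identify a and b
          rw [List.getLast?_reverse, List.head?_eq_head hr₁ne] at ha
          rw [List.head?_reverse, List.getLast?_eq_getLast hr₂ne] at hb
          have ha' : a = r₁.head hr₁ne := by simpa using ha.symm
          have hb' : b = r₂.getLast hr₂ne := by simpa using hb.symm
          obtain ⟨x, hx, y, hy, hxy⟩ := hov r₁ r₂ (by rw [runSplit_eq]; exact hrr)
          have h1 : r₁.head hr₁ne ≤ x := head_le_of_chain' hr₁ne (hgood.2.1 r₁ hr₁).2 x hx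
          have h2 : y ≤ r₂.getLast hr₂ne := le_getLast_of_chain' hr₂ne (hgood.2.1 r₂ hr₂).2 y hy
          subst ha' hb'
          exact Nat.not_lt.2 (le_of_lt (lt_of_le_of_lt h1 (lt_of_lt_of_le hxy h2)))
      rw [hrec, List.map_map]
      have : (List.reverse ∘ List.reverse : List ℕ → List ℕ) = id := by
        funext x; simp
      rw [this, List.map_id, hgood.1]
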